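/- For any string ω ∈ {0,1,2}^n containing exactly one entry equal to 1, if the excess satisfies E_n(ω) > 1 then U(ω) > n − R(ω), where U(ω) is the position of the 1 and R(ω) is the length of the maximal suffix of 0s of Π_1ω. Equivalently, if U(ω) ≤ n − R(ω) then E_n(ω) ≤ 1. -/
import Mathlib


open MeasureTheory ProbabilityTheory Filter Topology

namespace TASEP

/-- Extension of a string `ω ∈ {0,1,2}ⁿ` to all integer indices (0-based), with the
boundary convention that out-of-range entries on the left are `2` and on the right are `0`
(so that the boundary inequalities in the update rule are automatically satisfied, and
no out-of-range pair is ever swapped). -/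
def extStr (n : ℕ) (ω : Fin n → Fin 3) (i : ℤ) : Fin 3 :=
  if h : 0 ≤ i ∧ i < n then ω ⟨i.toNat, by omega⟩
  else if i < 0 then 2 else 0

/-- The (1-based) `i`-th entry of the string `ω`. -/
def entry (n : ℕ) (ω : Fin n → Fin 3) (i : ℕ) : Fin 3 := extStr n ω ((i : ℤ) - 1)

/-- Whether the (0-based) pair of positions `(i, i+1)` is swapped by the three-type
evolution step: either the generic rule `ω_{i-1} ≥ ω_i < ω_{i+1} ≥ ω_{i+2}` (out-of-range
inequalities considered satisfied), or the priority rule: in the pattern `012` the pair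
`12` swaps (into `021`). -/
def swapPair (n : ℕ) (ω : Fin n → Fin 3) (i : ℤ) : Bool :=
  decide ((extStr n ω i < extStr n ω (i+1) ∧ extStr n ω i ≤ extStr n ω (i-1) ∧
      extStr n ω (i+2) ≤ extStr n ω (i+1))
    ∨ (extStr n ω (i-1) = 0 ∧ extStr n ω i = 1 ∧ extStr n ω (i+1) = 2))

/-- The three-type parallel evolution step `Z` on `{0,1,2}ⁿ`. -/
def Zstep (n : ℕ) (ω : Fin n → Fin 3) : Fin n → Fin 3 := fun j =>
  if swapPair n ω j then extStr n ω ((j : ℤ) + 1)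
  else if swapPair n ω ((j : ℤ) - 1) then extStr n ω ((j : ℤ) - 1)
  else ω j

/-- Whether the (0-based) pair `(i, i+1)` forms the pattern `02` (two-type step). -/
def swapPair2 (n : ℕ) (ω : Fin n → Fin 3) (i : ℤ) : Bool :=
  decide (extStr n ω i = 0 ∧ extStr n ω (i+1) = 2)

/-- The two-type parallel evolution step `Z⁽²⁾`, replacing every occurrence of the
substring `02` by `20` (strings over `{0,2}` are realized inside `{0,1,2}ⁿ`). -/
def Z2step (n : ℕ) (ω : Fin n → Fin 3) : Fin n → Fin 3 := fun j =>
  if swapPair2 n ω j then extStr n ω ((j : ℤ) + 1)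
  else if swapPair2 n ω ((j : ℤ) - 1) then extStr n ω ((j : ℤ) - 1)
  else ω j

/-- Stabilization time of `ω` under repeated application of the step `Zf`:
`min {k ≥ 0 : Zf^[k] ω = Zf^[k+1] ω}` (`sInf`, which is `0` if no such `k` exists). -/
noncomputable def stabTime (n : ℕ) (Zf : (Fin n → Fin 3) → (Fin n → Fin 3))
    (ω : Fin n → Fin 3) : ℕ :=
  sInf {k | Zf^[k] ω = Zf^[k + 1] ω}

/-- The two-type stabilization time `T_n^{(2)}`. -/
noncomputable def T2 (n : ℕ) (ω : Fin n → Fin 3) : ℕ := stabTime n (Z2step n) ω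

/-- The three-type stabilization time `T_n`. -/
noncomputable def T3 (n : ℕ) (ω : Fin n → Fin 3) : ℕ := stabTime n (Zstep n) ω

/-- The projection `Π₁`, replacing each `1` by `0`. -/
def proj1 (n : ℕ) (ω : Fin n → Fin 3) : Fin n → Fin 3 := fun j => if ω j = 2 then 2 else 0

/-- The excess `E_n(ω) = T_n(ω) - T_n^{(2)}(Π₁ ω)` (as an integer). -/
noncomputable def excess (n : ℕ) (ω : Fin n → Fin 3) : ℤ :=
  (T3 n ω : ℤ) - (T2 n (proj1 n ω) : ℤ)

/-- The Bernoulli measure on one letter: `2` with probability `p`, `0` with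
probability `1 - p`. -/
noncomputable def bern3 (p : ℝ) : Measure (Fin 3) :=
  ENNReal.ofReal (1 - p) • Measure.dirac 0 + ENNReal.ofReal p • Measure.dirac 2

/-- The Bernoulli product measure of parameter `p` on strings of length `n`
(supported on two-type strings `{0,2}ⁿ`). -/
noncomputable def bernString (n : ℕ) (p : ℝ) : Measure (Fin n → Fin 3) :=
  Measure.pi fun _ => bern3 p

/-- The (1-based) position `U(ω)` of the (unique) `1` in `ω`. -/
noncomputable def Upos (n : ℕ) (ω : Fin n → Fin 3) : ℕ :=
  sInf {i : ℕ | entry n ω i = 1}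

/-- The length `L(ω)` of the maximal prefix of `2`s of `Π₁ ω`. -/
noncomputable def Llen (n : ℕ) (ω : Fin n → Fin 3) : ℕ :=
  sSup {k : ℕ | k ≤ n ∧ ∀ i, 1 ≤ i → i ≤ k → entry n (proj1 n ω) i = 2}

/-- The length `R(ω)` of the maximal suffix of `0`s of `Π₁ ω`. -/
noncomputable def Rlen (n : ℕ) (ω : Fin n → Fin 3) : ℕ :=
  sSup {k : ℕ | k ≤ n ∧ ∀ i, n - k + 1 ≤ i → i ≤ n → entry n (proj1 n ω) i = 0}

/-- The height function `S_k = ∑_{i=1}^k (1 - (Π₁ω)_i)` (1-based). -/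
def heightS (n : ℕ) (ω : Fin n → Fin 3) (k : ℕ) : ℤ :=
  ∑ i ∈ Finset.Icc 1 k, (1 - ((entry n (proj1 n ω) i).val : ℤ))

/-- The switching position `K(ω)`: the rightmost `k ∈ {L+2, …, n−R−1}` such that
`S_l < S_k − 1` for all `l = L, …, k−2`, and `K(ω) = L+2` if no such `k` exists. -/
noncomputable def Kpos (n : ℕ) (ω : Fin n → Fin 3) : ℕ :=
  sSup (insert (Llen n ω + 2)
    {k : ℕ | Llen n ω + 2 ≤ k ∧ k ≤ n - Rlen n ω - 1 ∧
      ∀ l, Llen n ω ≤ l → l ≤ k - 2 → heightS n ω l < heightS n ω k - 1})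

/-- The position `M(ω)` of the leftmost maximum of the height on `{L+1, …, n−R−1}`. -/
noncomputable def Mpos (n : ℕ) (ω : Fin n → Fin 3) : ℕ :=
  sInf {j : ℕ | Llen n ω + 1 ≤ j ∧ j ≤ n - Rlen n ω - 1 ∧
    ∀ i, Llen n ω + 1 ≤ i → i ≤ n - Rlen n ω - 1 → heightS n ω i ≤ heightS n ω j}

-- ===== auxiliary development =====
section Aux

def SP (a b c d : Fin 3) : Prop := (b < c ∧ b ≤ a ∧ d ≤ c) ∨ (a = 0 ∧ b = 1 ∧ c = 2)

instance (a b c d : Fin 3) : Decidable (SP a b c d) :=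
  inferInstanceAs (Decidable ((b < c ∧ b ≤ a ∧ d ≤ c) ∨ (a = 0 ∧ b = 1 ∧ c = 2)))

def SP2 (a b : Fin 3) : Prop := a = 0 ∧ b = 2

instance (a b : Fin 3) : Decidable (SP2 a b) := inferInstanceAs (Decidable (_ ∧ _))

def pr (a : Fin 3) : Fin 3 := if a = 2 then 2 else 0

variable {n : ℕ}

lemma extStr_neg (ω : Fin n → Fin 3) {i : ℤ} (h : i < 0) : extStr n ω i = 2 := by
  unfold extStr; rw [dif_neg (by omega), if_pos h]

lemma extStr_ge (ω : Fin n → Fin 3) {i : ℤ} (h : (n:ℤ) ≤ i) : extStr n ω i = 0 := by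
  unfold extStr; rw [dif_neg (by omega), if_neg (by omega)]

lemma extStr_inrange (ω : Fin n → Fin 3) {i : ℤ} (h0 : 0 ≤ i) (h1 : i < n) :
    extStr n ω i = ω ⟨i.toNat, by omega⟩ := by
  unfold extStr; rw [dif_pos ⟨h0, h1⟩]

lemma extStr_fin (ω : Fin n → Fin 3) (j : Fin n) : extStr n ω (j : ℤ) = ω j := by
  rw [extStr_inrange ω (by positivity) (by exact_mod_cast j.isLt)]
  exact congrArg ω (Fin.ext (by simp))

lemma eq_of_extStr {σ τ : Fin n → Fin 3}
    (h : ∀ i : ℤ, 0 ≤ i → i < n → extStr n σ i = extStr n τ i) : σ = τ := by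
  funext j
  have := h (j : ℤ) (by positivity) (by exact_mod_cast j.isLt)
  rwa [extStr_fin, extStr_fin] at this

lemma swapPair_eq_decide (ω : Fin n → Fin 3) (i : ℤ) :
    swapPair n ω i = decide (SP (extStr n ω (i-1)) (extStr n ω i)
      (extStr n ω (i+1)) (extStr n ω (i+2))) := by
  simp only [swapPair, decide_eq_decide]
  unfold SP
  exact Iff.rfl

lemma swapPair2_eq_decide (ω : Fin n → Fin 3) (i : ℤ) :
    swapPair2 n ω i = decide (SP2 (extStr n ω i) (extStr n ω (i+1))) := by
  simp only [swapPair2, decide_eq_decide]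
  unfold SP2
  exact Iff.rfl

end Aux


section Aux2
variable {n : ℕ}

lemma SP_not_overlap {a b c d e : Fin 3} (h : SP a b c d) : ¬ SP b c d e := by
  revert h; revert a b c d e; decide

lemma SP_b2 (a c d : Fin 3) : ¬ SP a 2 c d := by revert a c d; decide

lemma SP_c0 (a b d : Fin 3) : ¬ SP a b 0 d := by revert a b d; decide

lemma SP_u_iff {b : Fin 3} (d e : Fin 3) (hb : b ≠ 1) : SP b 1 d e ↔ d = 2 := by
  revert hb; revert b d e; decide

lemma SP_um1_iff (a : Fin 3) {b : Fin 3} (d : Fin 3) (hb : b ≠ 1) :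
    SP a b 1 d ↔ (b = 0 ∧ d ≠ 2) := by
  revert hb; revert a b d; decide

lemma SP_c2_b {a b d : Fin 3} (h : SP a b 2 d) (hb : b ≠ 1) : b = 0 := by
  revert h hb; revert a b d; decide

lemma SP_c2_pr {a b d : Fin 3} (h : SP a b 2 d) : pr b = 0 := by
  revert h; revert a b d; decide

lemma fin3_cases (x : Fin 3) : x = 0 ∨ x = 1 ∨ x = 2 := by revert x; decide

lemma pr_cases (x : Fin 3) : pr x = 0 ∨ pr x = 2 := by revert x; decide

lemma pr_ne2 {x : Fin 3} (h : x ≠ 2) : pr x = 0 := by revert h; revert x; decide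

lemma SP_key (a b c d e : Fin 3) :
    (if SP2 (pr c) (pr d) then pr d else if SP2 (pr b) (pr c) then pr b else pr c)
      = pr (if SP b c d e then d else if SP a b c d then b else c) := by
  revert a b c d e; decide

lemma SP2_not_overlap {a b c : Fin 3} (h : SP2 a b) : ¬ SP2 b c := by
  revert h; revert a b c; decide

-- the main step, at the level of extStr, with Prop conditions
lemma extStr_Zstep (ω : Fin n → Fin 3) (i : ℤ) :
    extStr n (Zstep n ω) i =
      if SP (extStr n ω (i-1)) (extStr n ω i) (extStr n ω (i+1)) (extStr n ω (i+2))
      then extStr n ω (i+1)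
      else if SP (extStr n ω (i-2)) (extStr n ω (i-1)) (extStr n ω i) (extStr n ω (i+1))
      then extStr n ω (i-1)
      else extStr n ω i := by
  have e1 : i - 1 - 1 = i - 2 := by ring
  have e2 : i - 1 + 1 = i := by ring
  have e3 : i - 1 + 2 = i + 1 := by ring
  by_cases hr : 0 ≤ i ∧ i < n
  · rw [extStr_inrange (Zstep n ω) hr.1 hr.2]
    have hj : (((⟨i.toNat, by omega⟩ : Fin n)) : ℤ) = i := by simp; omega
    show (if swapPair n ω _ then _ else if swapPair n ω _ then _ else _) = _
    simp only [hj]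
    rw [swapPair_eq_decide, swapPair_eq_decide, e1, e2, e3,
      ← extStr_inrange ω hr.1 hr.2]
    by_cases h1 : SP (extStr n ω (i-1)) (extStr n ω i) (extStr n ω (i+1)) (extStr n ω (i+2)) <;>
      by_cases h2 : SP (extStr n ω (i-2)) (extStr n ω (i-1)) (extStr n ω i) (extStr n ω (i+1)) <;>
      simp [h1, h2]
  · rcases (by omega : i < 0 ∨ (n:ℤ) ≤ i) with hlt | hge
    · have c1 : ¬ SP (extStr n ω (i-1)) (extStr n ω i) (extStr n ω (i+1)) (extStr n ω (i+2)) := by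
        rw [extStr_neg ω hlt]; exact SP_b2 _ _ _
      have c2 : ¬ SP (extStr n ω (i-2)) (extStr n ω (i-1)) (extStr n ω i) (extStr n ω (i+1)) := by
        rw [extStr_neg ω (by omega : i - 1 < 0)]; exact SP_b2 _ _ _
      rw [extStr_neg (Zstep n ω) hlt, if_neg c1, if_neg c2, extStr_neg ω hlt]
    · have c1 : ¬ SP (extStr n ω (i-1)) (extStr n ω i) (extStr n ω (i+1)) (extStr n ω (i+2)) := by
        rw [extStr_ge ω (by omega : (n:ℤ) ≤ i + 1)]; exact SP_c0 _ _ _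
      have c2 : ¬ SP (extStr n ω (i-2)) (extStr n ω (i-1)) (extStr n ω i) (extStr n ω (i+1)) := by
        rw [extStr_ge ω hge]; exact SP_c0 _ _ _
      rw [extStr_ge (Zstep n ω) hge, if_neg c1, if_neg c2, extStr_ge ω hge]

lemma extStr_Z2step (ω : Fin n → Fin 3) (i : ℤ) :
    extStr n (Z2step n ω) i =
      if SP2 (extStr n ω i) (extStr n ω (i+1)) then extStr n ω (i+1)
      else if SP2 (extStr n ω (i-1)) (extStr n ω i) then extStr n ω (i-1)
      else extStr n ω i := by
  have e2 : i - 1 + 1 = i := by ring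
  by_cases hr : 0 ≤ i ∧ i < n
  · rw [extStr_inrange (Z2step n ω) hr.1 hr.2]
    have hj : (((⟨i.toNat, by omega⟩ : Fin n)) : ℤ) = i := by simp; omega
    show (if swapPair2 n ω _ then _ else if swapPair2 n ω _ then _ else _) = _
    simp only [hj]
    rw [swapPair2_eq_decide, swapPair2_eq_decide, e2, ← extStr_inrange ω hr.1 hr.2]
    by_cases h1 : SP2 (extStr n ω i) (extStr n ω (i+1)) <;>
      by_cases h2 : SP2 (extStr n ω (i-1)) (extStr n ω i) <;>
      simp [h1, h2]
  · rcases (by omega : i < 0 ∨ (n:ℤ) ≤ i) with hlt | hge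
    · have c1 : ¬ SP2 (extStr n ω i) (extStr n ω (i+1)) := by
        rw [extStr_neg ω hlt]; rintro ⟨h, -⟩; exact absurd h (by decide)
      have c2 : ¬ SP2 (extStr n ω (i-1)) (extStr n ω i) := by
        rw [extStr_neg ω (by omega : i - 1 < 0)]; rintro ⟨h, -⟩; exact absurd h (by decide)
      rw [extStr_neg (Z2step n ω) hlt, if_neg c1, if_neg c2, extStr_neg ω hlt]
    · have c1 : ¬ SP2 (extStr n ω i) (extStr n ω (i+1)) := by
        rw [extStr_ge ω (by omega : (n:ℤ) ≤ i + 1)]; rintro ⟨-, h⟩; exact absurd h (by decide)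
      have c2 : ¬ SP2 (extStr n ω (i-1)) (extStr n ω i) := by
        rw [extStr_ge ω hge]; rintro ⟨-, h⟩; exact absurd h (by decide)
      rw [extStr_ge (Z2step n ω) hge, if_neg c1, if_neg c2, extStr_ge ω hge]

lemma extStr_proj1 (ω : Fin n → Fin 3) (i : ℤ) :
    extStr n (proj1 n ω) i = pr (extStr n ω i) := by
  by_cases hr : 0 ≤ i ∧ i < n
  · rw [extStr_inrange (proj1 n ω) hr.1 hr.2, extStr_inrange ω hr.1 hr.2]; rfl
  · rcases (by omega : i < 0 ∨ (n:ℤ) ≤ i) with hlt | hge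
    · rw [extStr_neg (proj1 n ω) hlt, extStr_neg ω hlt]; rfl
    · rw [extStr_ge (proj1 n ω) hge, extStr_ge ω hge]; rfl

end Aux2


section Aux3
variable {n : ℕ}

lemma proj1_Zstep (ω : Fin n → Fin 3) :
    proj1 n (Zstep n ω) = Z2step n (proj1 n ω) := by
  apply eq_of_extStr
  intro i _ _
  rw [extStr_proj1, extStr_Zstep, extStr_Z2step, extStr_proj1, extStr_proj1, extStr_proj1]
  exact (SP_key (extStr n ω (i-2)) (extStr n ω (i-1)) (extStr n ω i)
    (extStr n ω (i+1)) (extStr n ω (i+2))).symm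

lemma proj1_Zstep_iter (ω : Fin n → Fin 3) (k : ℕ) :
    proj1 n ((Zstep n)^[k] ω) = (Z2step n)^[k] (proj1 n ω) := by
  induction k with
  | zero => rfl
  | succ k ih =>
      rw [Function.iterate_succ_apply', Function.iterate_succ_apply', proj1_Zstep, ih]

lemma Zstep_eq_self (ω : Fin n → Fin 3)
    (h : ∀ i : ℤ, ¬ SP (extStr n ω (i-1)) (extStr n ω i) (extStr n ω (i+1)) (extStr n ω (i+2))) :
    Zstep n ω = ω := by
  apply eq_of_extStr
  intro i _ _
  rw [extStr_Zstep, if_neg (h i), if_neg (by have := h (i-1); rwa [(by ring : i-1-1 = i-2),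
    (by ring : i-1+1 = i), (by ring : i-1+2 = i+1)] at this)]

lemma Z2step_eq_self (ω : Fin n → Fin 3)
    (h : ∀ i : ℤ, ¬ SP2 (extStr n ω i) (extStr n ω (i+1))) :
    Z2step n ω = ω := by
  apply eq_of_extStr
  intro i _ _
  rw [extStr_Z2step, if_neg (h i), if_neg (by have := h (i-1); rwa [(by ring : i-1+1 = i)] at this)]

lemma noswap2_of_fixed {ω : Fin n → Fin 3} (h : Z2step n ω = ω) :
    ∀ i : ℤ, ¬ SP2 (extStr n ω i) (extStr n ω (i+1)) := by
  intro i hsp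
  have h2 : extStr n (Z2step n ω) i = extStr n ω i := by rw [h]
  rw [extStr_Z2step, if_pos hsp] at h2
  rw [hsp.2, hsp.1] at h2
  exact absurd h2 (by decide)

-- potential function and termination of Z2step
def Phi (n : ℕ) (ω : Fin n → Fin 3) : ℕ :=
  ∑ j ∈ Finset.range n, (if extStr n ω (j : ℤ) = 2 then j else 0)

lemma SP2_inrange {ω : Fin n → Fin 3} {i : ℤ}
    (h : SP2 (extStr n ω i) (extStr n ω (i+1))) : 0 ≤ i ∧ i + 1 < n := by
  constructor
  · by_contra hc
    rw [extStr_neg ω (show i < 0 by omega)] at h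
    exact absurd h.1 (by decide)
  · by_contra hc
    rw [extStr_ge ω (show (n:ℤ) ≤ i + 1 by omega)] at h
    exact absurd h.2 (by decide)

lemma Phi_decrease (ω : Fin n → Fin 3)
    (h : ∃ i : ℤ, SP2 (extStr n ω i) (extStr n ω (i+1))) :
    Phi n (Z2step n ω) < Phi n ω := by
  classical
  have claim1 : ∀ j : ℕ,
      (if extStr n ω (j : ℤ) = 2 then j else 0)
        + (if SP2 (extStr n ω (j : ℤ)) (extStr n ω ((j : ℤ)+1)) then j else 0)
      = (if extStr n (Z2step n ω) (j : ℤ) = 2 then j else 0)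
        + (if SP2 (extStr n ω ((j : ℤ)-1)) (extStr n ω (j : ℤ)) then j else 0) := by
    intro j
    rw [extStr_Z2step]
    by_cases h1 : SP2 (extStr n ω (j : ℤ)) (extStr n ω ((j : ℤ)+1))
    · have h2 : ¬ SP2 (extStr n ω ((j : ℤ)-1)) (extStr n ω (j : ℤ)) := by
        rintro ⟨-, hx⟩; rw [h1.1] at hx; exact absurd hx (by decide)
      rw [if_pos h1, if_pos h1, if_neg h2, h1.1, h1.2,
        if_neg (show (0:Fin 3) ≠ 2 by decide), if_pos rfl]
      omega
    · by_cases h2 : SP2 (extStr n ω ((j : ℤ)-1)) (extStr n ω (j : ℤ))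
      · rw [if_neg h1, if_neg h1, if_pos h2, if_pos h2, h2.1, h2.2,
          if_neg (show (0:Fin 3) ≠ 2 by decide), if_pos rfl]
        omega
      · rw [if_neg h1, if_neg h1, if_neg h2, if_neg h2]
  have claim2 : (∑ j ∈ Finset.range n,
        (if SP2 (extStr n ω ((j : ℤ)-1)) (extStr n ω (j : ℤ)) then j else 0))
      = (∑ j ∈ Finset.range n,
          (if SP2 (extStr n ω (j : ℤ)) (extStr n ω ((j : ℤ)+1)) then j else 0))
        + (∑ j ∈ Finset.range n,
          (if SP2 (extStr n ω (j : ℤ)) (extStr n ω ((j : ℤ)+1)) then 1 else 0)) := by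
    have hhn : ∀ m : ℕ, n ≤ m →
        (if SP2 (extStr n ω ((m : ℤ)-1)) (extStr n ω (m : ℤ)) then m else 0) = 0 := by
      intro m hm
      rw [if_neg]
      rintro ⟨-, hx⟩
      rw [extStr_ge ω (by exact_mod_cast hm)] at hx
      exact absurd hx (by decide)
    have e1 : (∑ j ∈ Finset.range n,
          (if SP2 (extStr n ω ((j : ℤ)-1)) (extStr n ω (j : ℤ)) then j else 0))
        = ∑ j ∈ Finset.range (n+1),
          (if SP2 (extStr n ω ((j : ℤ)-1)) (extStr n ω (j : ℤ)) then j else 0) := by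
      rw [Finset.sum_range_succ, hhn n le_rfl, add_zero]
    rw [e1, Finset.sum_range_succ']
    have h0 : (if SP2 (extStr n ω (((0:ℕ) : ℤ)-1)) (extStr n ω ((0:ℕ) : ℤ)) then (0:ℕ) else 0) = 0 := by
      simp
    rw [h0, add_zero]
    have hsh : ∀ k : ℕ,
        (if SP2 (extStr n ω (((k+1 : ℕ) : ℤ)-1)) (extStr n ω ((k+1 : ℕ) : ℤ)) then (k+1 : ℕ) else 0)
        = (if SP2 (extStr n ω (k : ℤ)) (extStr n ω ((k : ℤ)+1)) then k else 0)
          + (if SP2 (extStr n ω (k : ℤ)) (extStr n ω ((k : ℤ)+1)) then 1 else 0) := by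
      intro k
      rw [(by push_cast; ring : (((k+1 : ℕ)) : ℤ) - 1 = (k : ℤ)),
          (by push_cast; ring : (((k+1 : ℕ)) : ℤ) = (k : ℤ) + 1)]
      by_cases h1 : SP2 (extStr n ω (k : ℤ)) (extStr n ω ((k : ℤ)+1))
      · rw [if_pos h1, if_pos h1, if_pos h1]
      · rw [if_neg h1, if_neg h1, if_neg h1]
    calc (∑ k ∈ Finset.range n,
          (if SP2 (extStr n ω (((k+1 : ℕ) : ℤ)-1)) (extStr n ω ((k+1 : ℕ) : ℤ)) then (k+1:ℕ) else 0))
        = ∑ k ∈ Finset.range n,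
            ((if SP2 (extStr n ω (k : ℤ)) (extStr n ω ((k : ℤ)+1)) then k else 0)
            + (if SP2 (extStr n ω (k : ℤ)) (extStr n ω ((k : ℤ)+1)) then 1 else 0)) :=
          Finset.sum_congr rfl (fun k _ => hsh k)
      _ = _ := Finset.sum_add_distrib
  have claim3 : 1 ≤ ∑ j ∈ Finset.range n,
      (if SP2 (extStr n ω (j : ℤ)) (extStr n ω ((j : ℤ)+1)) then 1 else 0) := by
    obtain ⟨i, hi⟩ := h
    have hir := SP2_inrange hi
    have hk : ((i.toNat : ℕ) : ℤ) = i := Int.toNat_of_nonneg hir.1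
    have hmem : i.toNat ∈ Finset.range n := Finset.mem_range.mpr (by omega)
    calc (1:ℕ) = (if SP2 (extStr n ω ((i.toNat : ℕ) : ℤ)) (extStr n ω (((i.toNat : ℕ) : ℤ)+1)) then 1 else 0) := by
          rw [hk, if_pos hi]
      _ ≤ _ := Finset.single_le_sum (f := fun j : ℕ =>
          (if SP2 (extStr n ω (j : ℤ)) (extStr n ω ((j : ℤ)+1)) then 1 else 0))
          (fun _ _ => Nat.zero_le _) hmem
  have total : Phi n ω
      + (∑ j ∈ Finset.range n, (if SP2 (extStr n ω (j : ℤ)) (extStr n ω ((j : ℤ)+1)) then j else 0))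
      = Phi n (Z2step n ω)
      + ((∑ j ∈ Finset.range n, (if SP2 (extStr n ω (j : ℤ)) (extStr n ω ((j : ℤ)+1)) then j else 0))
        + (∑ j ∈ Finset.range n, (if SP2 (extStr n ω (j : ℤ)) (extStr n ω ((j : ℤ)+1)) then 1 else 0))) := by
    rw [← claim2]
    unfold Phi
    rw [← Finset.sum_add_distrib, ← Finset.sum_add_distrib]
    exact Finset.sum_congr rfl (fun j _ => claim1 j)
  omega

lemma Z2_terminates (τ : Fin n → Fin 3) :
    ∃ k : ℕ, (Z2step n)^[k] τ = (Z2step n)^[k+1] τ := by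
  classical
  suffices H : ∀ m : ℕ, ∀ τ : Fin n → Fin 3, Phi n τ ≤ m →
      ∃ k : ℕ, (Z2step n)^[k] τ = (Z2step n)^[k+1] τ from H (Phi n τ) τ le_rfl
  intro m
  induction m with
  | zero =>
      intro τ hm
      by_cases hns : ∀ i : ℤ, ¬ SP2 (extStr n τ i) (extStr n τ (i+1))
      · exact ⟨0, by simpa using (Z2step_eq_self τ hns).symm⟩
      · push_neg at hns
        have := Phi_decrease τ (by simpa using hns)
        omega
  | succ m ih =>
      intro τ hm
      by_cases hns : ∀ i : ℤ, ¬ SP2 (extStr n τ i) (extStr n τ (i+1))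
      · exact ⟨0, by simpa using (Z2step_eq_self τ hns).symm⟩
      · push_neg at hns
        have hd := Phi_decrease τ (by simpa using hns)
        obtain ⟨k, hk⟩ := ih (Z2step n τ) (by omega)
        refine ⟨k+1, ?_⟩
        rw [Function.iterate_succ_apply, Function.iterate_succ_apply (Z2step n) (k+1)]
        exact hk

end Aux3


section Aux4
variable {n : ℕ}

/-- The invariant: `ω` has a unique `1`, at position `u`, and either there is a `2`
strictly to the right of the `1`, or the `1` is at distance at most `2` from the
nearest `2` (or boundary) on its left, with only `0` in between. -/
def Inv (n : ℕ) (ω : Fin n → Fin 3) (u : ℤ) : Prop :=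
  (extStr n ω u = 1 ∧ ∀ i : ℤ, extStr n ω i = 1 → i = u) ∧
  ((∃ q, u < q ∧ extStr n ω q = 2) ∨ extStr n ω (u-1) = 2 ∨
    (extStr n ω (u-1) = 0 ∧ extStr n ω (u-2) = 2))

lemma pers2 (ω : Fin n → Fin 3) {q : ℤ} (hq : extStr n ω q = 2) :
    ∃ q', q - 1 ≤ q' ∧ extStr n (Zstep n ω) q' = 2 := by
  have c1 : ¬ SP (extStr n ω (q-1)) (extStr n ω q) (extStr n ω (q+1)) (extStr n ω (q+2)) := by
    rw [hq]; exact SP_b2 _ _ _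
  by_cases c2 : SP (extStr n ω (q-2)) (extStr n ω (q-1)) (extStr n ω q) (extStr n ω (q+1))
  · refine ⟨q-1, by omega, ?_⟩
    rw [extStr_Zstep, show q-1-1 = q-2 by ring, show q-1+1 = q by ring,
      show q-1+2 = q+1 by ring, if_pos c2]
    exact hq
  · exact ⟨q, by omega, by rw [extStr_Zstep, if_neg c1, if_neg c2]; exact hq⟩

lemma preserve (ω : Fin n → Fin 3) (u : ℤ) (h : Inv n ω u) :
    ∃ u', Inv n (Zstep n ω) u' := by
  classical
  obtain ⟨⟨hu1, huq⟩, hdisj⟩ := h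
  have hb : extStr n ω (u-1) ≠ 1 := fun hx => by have := huq _ hx; omega
  have hd : extStr n ω (u+1) ≠ 1 := fun hx => by have := huq _ hx; omega
  have huniq' : ∀ i : ℤ, extStr n (Zstep n ω) i = 1 →
      ((SP (extStr n ω (u-1)) (extStr n ω u) (extStr n ω (u+1)) (extStr n ω (u+2))
          ∧ i = u + 1) ∨
       (SP (extStr n ω (u-2)) (extStr n ω (u-1)) (extStr n ω u) (extStr n ω (u+1))
          ∧ i = u - 1) ∨
       (¬ SP (extStr n ω (u-1)) (extStr n ω u) (extStr n ω (u+1)) (extStr n ω (u+2)) ∧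
        ¬ SP (extStr n ω (u-2)) (extStr n ω (u-1)) (extStr n ω u) (extStr n ω (u+1)) ∧
          i = u)) := by
    intro i hi
    rw [extStr_Zstep] at hi
    split_ifs at hi with c1 c2
    · have hieq : i = u - 1 := by have := huq _ hi; omega
      rw [hieq, show u-1-1 = u-2 by ring, show u-1+1 = u by ring,
        show u-1+2 = u+1 by ring] at c1
      exact Or.inr (Or.inl ⟨c1, hieq⟩)
    · have hieq : i = u + 1 := by have := huq _ hi; omega
      rw [hieq, show u+1-2 = u-1 by ring, show u+1-1 = u by ring,
        show u+1+1 = u+2 by ring] at c2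
      exact Or.inl ⟨c2, hieq⟩
    · have hieq : i = u := huq _ hi
      rw [hieq] at c1 c2
      exact Or.inr (Or.inr ⟨c1, c2, hieq⟩)
  by_cases hSu : SP (extStr n ω (u-1)) (extStr n ω u) (extStr n ω (u+1)) (extStr n ω (u+2))
  · -- the `1` moves right (a `2` jumps over it)
    have hd2 : extStr n ω (u+1) = 2 := by
      rw [hu1] at hSu; exact (SP_u_iff _ _ hb).mp hSu
    have hnm : ¬ SP (extStr n ω (u-2)) (extStr n ω (u-1)) (extStr n ω u) (extStr n ω (u+1)) :=
      fun hx => SP_not_overlap hx hSu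
    have hEu : extStr n (Zstep n ω) u = 2 := by
      rw [extStr_Zstep, if_pos hSu]; exact hd2
    refine ⟨u+1, ⟨?_, ?_⟩, Or.inr (Or.inl (by rw [show u+1-1 = u by ring]; exact hEu))⟩
    · rw [extStr_Zstep, show u+1-1 = u by ring, show u+1+1 = u+2 by ring,
        show u+1-2 = u-1 by ring, show u+1+2 = u+3 by ring,
        if_neg (fun hx => SP_not_overlap hSu hx), if_pos hSu]
      exact hu1
    · intro i hi
      rcases huniq' i hi with ⟨-, hh⟩ | ⟨hc, -⟩ | ⟨hc, -, -⟩
      · exact hh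
      · exact absurd hSu (SP_not_overlap hc)
      · exact absurd hSu hc
  · by_cases hSm : SP (extStr n ω (u-2)) (extStr n ω (u-1)) (extStr n ω u) (extStr n ω (u+1))
    · -- the `1` moves left
      have hbd : extStr n ω (u-1) = 0 ∧ extStr n ω (u+1) ≠ 2 := by
        rw [hu1] at hSm; exact (SP_um1_iff _ _ hb).mp hSm
      have hE'm : extStr n (Zstep n ω) (u-1) = 1 := by
        rw [extStr_Zstep, show u-1-1 = u-2 by ring, show u-1+1 = u by ring,
          show u-1+2 = u+1 by ring, if_pos hSm]
        exact hu1
      refine ⟨u-1, ⟨hE'm, ?_⟩, ?_⟩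
      · intro i hi
        rcases huniq' i hi with ⟨hc, -⟩ | ⟨-, hh⟩ | ⟨-, hc, -⟩
        · exact absurd hc hSu
        · exact hh
        · exact absurd hSm hc
      · -- re-establish the distance disjunct
        have hnm2 : ¬ SP (extStr n ω (u-3)) (extStr n ω (u-2)) (extStr n ω (u-1))
            (extStr n ω u) := fun hx => SP_not_overlap hx hSm
        rcases hdisj with ⟨q, hq, hq2⟩ | hc | ⟨-, ha2⟩
        · obtain ⟨q', hq'le, hq'⟩ := pers2 ω hq2
          exact Or.inl ⟨q', by omega, hq'⟩
        · rw [hbd.1] at hc; exact absurd hc (by decide)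
        · by_cases c3 : SP (extStr n ω (u-4)) (extStr n ω (u-3)) (extStr n ω (u-2))
              (extStr n ω (u-1))
          · have h31 : extStr n ω (u-3) ≠ 1 := fun hx => by have := huq _ hx; omega
            have h30 : extStr n ω (u-3) = 0 := by
              rw [ha2] at c3; exact SP_c2_b c3 h31
            refine Or.inr (Or.inr ⟨?_, ?_⟩)
            · rw [show u-1-1 = u-2 by ring, extStr_Zstep, show u-2-1 = u-3 by ring,
                show u-2+1 = u-1 by ring, show u-2+2 = u by ring, show u-2-2 = u-4 by ring,
                if_neg hnm2, if_pos c3]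
              exact h30
            · rw [show u-1-2 = u-3 by ring, extStr_Zstep, show u-3-1 = u-4 by ring,
                show u-3+1 = u-2 by ring, show u-3+2 = u-1 by ring, if_pos c3]
              exact ha2
          · refine Or.inr (Or.inl ?_)
            rw [show u-1-1 = u-2 by ring, extStr_Zstep, show u-2-1 = u-3 by ring,
              show u-2+1 = u-1 by ring, show u-2+2 = u by ring, show u-2-2 = u-4 by ring,
              if_neg hnm2, if_neg c3]
            exact ha2
    · -- the `1` does not move; `extStr n ω (u-1) = 2`
      have hb2 : extStr n ω (u-1) = 2 := by
        rcases fin3_cases (extStr n ω (u-1)) with h0 | h1 | h2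
        · exfalso
          apply hSm
          rw [hu1, SP_um1_iff _ _ hb]
          refine ⟨h0, fun hx => hSu ?_⟩
          rw [hu1, SP_u_iff _ _ hb]
          exact hx
        · exact absurd h1 hb
        · exact h2
      have hE'u : extStr n (Zstep n ω) u = 1 := by
        rw [extStr_Zstep, if_neg hSu, if_neg hSm]; exact hu1
      refine ⟨u, ⟨hE'u, ?_⟩, ?_⟩
      · intro i hi
        rcases huniq' i hi with ⟨hc, -⟩ | ⟨hc, -⟩ | ⟨-, -, hh⟩
        · exact absurd hc hSu
        · exact absurd hc hSm
        · exact hh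
      · by_cases c2 : SP (extStr n ω (u-3)) (extStr n ω (u-2)) (extStr n ω (u-1))
            (extStr n ω u)
        · have h21 : extStr n ω (u-2) ≠ 1 := fun hx => by have := huq _ hx; omega
          have h20 : extStr n ω (u-2) = 0 := by
            rw [hb2] at c2; exact SP_c2_b c2 h21
          refine Or.inr (Or.inr ⟨?_, ?_⟩)
          · rw [extStr_Zstep, show u-1-1 = u-2 by ring, show u-1+1 = u by ring,
              show u-1+2 = u+1 by ring, show u-1-2 = u-3 by ring, if_neg hSm, if_pos c2]
            exact h20
          · rw [extStr_Zstep, show u-2-1 = u-3 by ring, show u-2+1 = u-1 by ring,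
              show u-2+2 = u by ring, show u-2-2 = u-4 by ring,
              if_neg (fun hx => SP_not_overlap hx c2), if_pos c2]
            exact hb2
        · refine Or.inr (Or.inl ?_)
          rw [extStr_Zstep, show u-1-1 = u-2 by ring, show u-1+1 = u by ring,
            show u-1+2 = u+1 by ring, show u-1-2 = u-3 by ring, if_neg hSm, if_neg c2]
          exact hb2

end Aux4


section Aux5
variable {n : ℕ}

lemma adj02 (σ : Fin n → Fin 3) : ∀ k : ℕ, ∀ i q : ℤ, q - i ≤ (k:ℤ) → i < q →
    extStr n (proj1 n σ) i = 0 → extStr n (proj1 n σ) q = 2 →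
    ∃ j : ℤ, SP2 (extStr n (proj1 n σ) j) (extStr n (proj1 n σ) (j+1)) := by
  intro k
  induction k with
  | zero => intro i q h1 h2 _ _; exfalso; omega
  | succ k ih =>
      intro i q h1 h2 h0 hq2
      by_cases hnext : extStr n (proj1 n σ) (i+1) = 2
      · exact ⟨i, h0, hnext⟩
      · have h0' : extStr n (proj1 n σ) (i+1) = 0 := by
          rcases pr_cases (extStr n σ (i+1)) with hc | hc
          · rw [extStr_proj1]; exact hc
          · exact absurd (by rw [extStr_proj1]; exact hc) hnext
        have hlt : i + 1 < q := by
          rcases eq_or_lt_of_le (show i + 1 ≤ q by omega) with he | hl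
          · rw [he] at h0'; rw [h0'] at hq2; exact absurd hq2 (by decide)
          · exact hl
        exact ih (i+1) q (by push_cast at h1 ⊢; omega) hlt h0' hq2

lemma only_swap_at (σ : Fin n → Fin 3) (u : ℤ)
    (hσ1 : extStr n σ u = 1) (hσq : ∀ i : ℤ, extStr n σ i = 1 → i = u)
    (hp : ∀ i : ℤ, ¬ SP2 (extStr n (proj1 n σ) i) (extStr n (proj1 n σ) (i+1))) :
    ∀ i : ℤ, SP (extStr n σ (i-1)) (extStr n σ i) (extStr n σ (i+1)) (extStr n σ (i+2)) →
      i = u - 1 := by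
  intro i hsp
  rcases fin3_cases (extStr n σ (i+1)) with h0 | h1 | h2
  · rw [h0] at hsp; exact absurd hsp (SP_c0 _ _ _)
  · have := hσq _ h1; omega
  · exfalso
    apply hp i
    refine ⟨?_, ?_⟩
    · rw [extStr_proj1]; rw [h2] at hsp; exact SP_c2_pr hsp
    · rw [extStr_proj1, h2]; rfl

lemma final_step (σ : Fin n → Fin 3) (u : ℤ)
    (hσ1 : extStr n σ u = 1) (hσq : ∀ i : ℤ, extStr n σ i = 1 → i = u)
    (hdisj : (∃ q, u < q ∧ extStr n σ q = 2) ∨ extStr n σ (u-1) = 2 ∨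
      (extStr n σ (u-1) = 0 ∧ extStr n σ (u-2) = 2))
    (hp : ∀ i : ℤ, ¬ SP2 (extStr n (proj1 n σ) i) (extStr n (proj1 n σ) (i+1))) :
    Zstep n σ = σ ∨ Zstep n (Zstep n σ) = Zstep n σ := by
  classical
  have hclass := only_swap_at σ u hσ1 hσq hp
  by_cases hsw : SP (extStr n σ (u-2)) (extStr n σ (u-1)) (extStr n σ u) (extStr n σ (u+1))
  · -- one extra step
    right
    have hno2 : ¬ ∃ q, u < q ∧ extStr n σ q = 2 := by
      rintro ⟨q, hq, hq2⟩
      have h0 : extStr n (proj1 n σ) u = 0 := by rw [extStr_proj1, hσ1]; rfl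
      have h2' : extStr n (proj1 n σ) q = 2 := by rw [extStr_proj1, hq2]; rfl
      obtain ⟨j, hj⟩ := adj02 σ (q - u).toNat u q (by omega) hq h0 h2'
      exact hp j hj
    have hbne2 : extStr n σ (u-1) ≠ 2 := fun hx => by
      rw [hx] at hsw; exact SP_b2 _ _ _ hsw
    have hdd : extStr n σ (u-1) = 0 ∧ extStr n σ (u-2) = 2 := by
      rcases hdisj with hq | hc | hdd
      · exact absurd hq hno2
      · exact absurd hc hbne2
      · exact hdd
    obtain ⟨u'', hI''⟩ := preserve σ u ⟨⟨hσ1, hσq⟩, hdisj⟩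
    have hE'm : extStr n (Zstep n σ) (u-1) = 1 := by
      rw [extStr_Zstep, show u-1-1 = u-2 by ring, show u-1+1 = u by ring,
        show u-1+2 = u+1 by ring, if_pos hsw]
      exact hσ1
    have hu'' : u - 1 = u'' := hI''.1.2 _ hE'm
    have hquniq : ∀ i : ℤ, extStr n (Zstep n σ) i = 1 → i = u - 1 := fun i hi =>
      (hI''.1.2 i hi).trans hu''.symm
    have hpp : proj1 n (Zstep n σ) = proj1 n σ := by
      rw [proj1_Zstep]; exact Z2step_eq_self _ hp
    have hp' : ∀ i : ℤ, ¬ SP2 (extStr n (proj1 n (Zstep n σ)) i)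
        (extStr n (proj1 n (Zstep n σ)) (i+1)) := by rw [hpp]; exact hp
    have hC1 : ¬ SP (extStr n σ (u-3)) (extStr n σ (u-2)) (extStr n σ (u-1))
        (extStr n σ u) := by
      intro hx
      have hx' : SP (extStr n σ (u-2-1)) (extStr n σ (u-2)) (extStr n σ (u-2+1))
          (extStr n σ (u-2+2)) := by
        rw [show u-2-1 = u-3 by ring, show u-2+1 = u-1 by ring, show u-2+2 = u by ring]
        exact hx
      have := hclass (u-2) hx'; omega
    have hC2 : ¬ SP (extStr n σ (u-4)) (extStr n σ (u-3)) (extStr n σ (u-2))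
        (extStr n σ (u-1)) := by
      intro hx
      have hx' : SP (extStr n σ (u-3-1)) (extStr n σ (u-3)) (extStr n σ (u-3+1))
          (extStr n σ (u-3+2)) := by
        rw [show u-3-1 = u-4 by ring, show u-3+1 = u-2 by ring, show u-3+2 = u-1 by ring]
        exact hx
      have := hclass (u-3) hx'; omega
    have hE'2 : extStr n (Zstep n σ) (u-2) = 2 := by
      rw [extStr_Zstep, show u-2-1 = u-3 by ring, show u-2+1 = u-1 by ring,
        show u-2+2 = u by ring, show u-2-2 = u-4 by ring, if_neg hC1, if_neg hC2]
      exact hdd.2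
    have hclass' := only_swap_at (Zstep n σ) (u-1) hE'm hquniq hp'
    apply Zstep_eq_self
    intro i hx
    have hieq := hclass' i hx
    rw [hieq, show u-1-1 = u-2 by ring] at hx
    rw [hE'2] at hx
    exact SP_b2 _ _ _ hx
  · -- already fixed
    left
    apply Zstep_eq_self
    intro i hx
    have hieq := hclass i hx
    rw [hieq, show u-1-1 = u-2 by ring, show u-1+1 = u by ring,
      show u-1+2 = u+1 by ring] at hx
    exact hsw hx

end Aux5


/-- For any string `ω ∈ {0,1,2}ⁿ` containing exactly one `1`, if the
excess satisfies `E_n(ω) > 1` then `U(ω) > n − R(ω)`, where `U(ω)` is the position of the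
`1` and `R(ω)` is the length of the maximal suffix of `0`s of `Π₁ ω`. -/
theorem excess_gt_one_implies_U_gt (n : ℕ) (ω : Fin n → Fin 3)
    (h1 : ∃! j : Fin n, ω j = 1) (hE : 1 < excess n ω) :
    n - Rlen n ω < Upos n ω := by
  classical
  obtain ⟨j₀, hj0, hjuniq⟩ := h1
  have hu1 : extStr n ω (j₀ : ℤ) = 1 := by rw [extStr_fin]; exact hj0
  have huq : ∀ i : ℤ, extStr n ω i = 1 → i = (j₀ : ℤ) := by
    intro i hi
    by_cases hr : 0 ≤ i ∧ i < n
    · rw [extStr_inrange ω hr.1 hr.2] at hi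
      have h2 := hjuniq _ hi
      have h3 : ((⟨i.toNat, by omega⟩ : Fin n) : ℕ) = (j₀ : ℕ) := congrArg Fin.val h2
      simp only [] at h3
      omega
    · rcases (by omega : i < 0 ∨ (n:ℤ) ≤ i) with hlt | hge
      · rw [extStr_neg ω hlt] at hi; exact absurd hi (by decide)
      · rw [extStr_ge ω hge] at hi; exact absurd hi (by decide)
  by_cases h2 : ∃ q : ℤ, (j₀:ℤ) < q ∧ extStr n ω q = 2
  · -- excess ≤ 1 : contradiction
    exfalso
    have hne : {k | (Z2step n)^[k] (proj1 n ω) = (Z2step n)^[k+1] (proj1 n ω)}.Nonempty :=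
      Z2_terminates (proj1 n ω)
    have hfix : (Z2step n)^[T2 n (proj1 n ω)] (proj1 n ω)
        = (Z2step n)^[T2 n (proj1 n ω) + 1] (proj1 n ω) := Nat.sInf_mem hne
    have hfix' : Z2step n ((Z2step n)^[T2 n (proj1 n ω)] (proj1 n ω))
        = (Z2step n)^[T2 n (proj1 n ω)] (proj1 n ω) := by
      rw [Function.iterate_succ_apply'] at hfix; exact hfix.symm
    have hpσ : proj1 n ((Zstep n)^[T2 n (proj1 n ω)] ω)
        = (Z2step n)^[T2 n (proj1 n ω)] (proj1 n ω) := proj1_Zstep_iter ω _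
    have hp : ∀ i : ℤ, ¬ SP2 (extStr n (proj1 n ((Zstep n)^[T2 n (proj1 n ω)] ω)) i)
        (extStr n (proj1 n ((Zstep n)^[T2 n (proj1 n ω)] ω)) (i+1)) := by
      rw [hpσ]; exact noswap2_of_fixed hfix'
    have hinv : ∀ k : ℕ, ∃ u', Inv n ((Zstep n)^[k] ω) u' := by
      intro k
      induction k with
      | zero => exact ⟨(j₀:ℤ), ⟨hu1, huq⟩, Or.inl h2⟩
      | succ k ih =>
          obtain ⟨u', hI⟩ := ih
          rw [Function.iterate_succ_apply']
          exact preserve _ _ hI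
    obtain ⟨u, ⟨hσ1, hσq⟩, hσdisj⟩ := hinv (T2 n (proj1 n ω))
    have hT3 : T3 n ω ≤ T2 n (proj1 n ω) + 1 := by
      rcases final_step ((Zstep n)^[T2 n (proj1 n ω)] ω) u hσ1 hσq hσdisj hp with hfx | hfx
      · have hmem : T2 n (proj1 n ω) ∈ {k | (Zstep n)^[k] ω = (Zstep n)^[k+1] ω} := by
          show (Zstep n)^[T2 n (proj1 n ω)] ω = (Zstep n)^[T2 n (proj1 n ω) + 1] ω
          rw [Function.iterate_succ_apply']
          exact hfx.symm
        exact le_trans (Nat.sInf_le hmem) (by omega)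
      · have hmem : T2 n (proj1 n ω) + 1 ∈ {k | (Zstep n)^[k] ω = (Zstep n)^[k+1] ω} := by
          show (Zstep n)^[T2 n (proj1 n ω) + 1] ω = (Zstep n)^[T2 n (proj1 n ω) + 1 + 1] ω
          rw [Function.iterate_succ_apply', Function.iterate_succ_apply',
            Function.iterate_succ_apply']
          exact hfx.symm
        exact Nat.sInf_le hmem
    have hcon : excess n ω ≤ 1 := by
      unfold excess
      omega
    omega
  · -- the `1` lies in the maximal suffix of `0`s : conclude directly
    push_neg at h2
    have hUset : {i : ℕ | entry n ω i = 1} = {(j₀:ℕ) + 1} := by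
      ext i
      simp only [Set.mem_setOf_eq, Set.mem_singleton_iff, entry]
      constructor
      · intro hi; have := huq _ hi; omega
      · intro hi
        subst hi
        rw [show (((j₀:ℕ) + 1 : ℕ) : ℤ) - 1 = (j₀:ℤ) by push_cast; ring]
        exact hu1
    have hU : Upos n ω = (j₀:ℕ) + 1 := by
      unfold Upos
      rw [hUset]
      exact csInf_singleton _
    have hj : (j₀:ℕ) < n := j₀.isLt
    have hR : n - (j₀:ℕ) ≤ Rlen n ω := by
      apply le_csSup ⟨n, fun x hx => hx.1⟩
      refine ⟨by omega, ?_⟩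
      intro i hi1 hi2
      have hge : (j₀:ℕ) + 1 ≤ i := by omega
      show extStr n (proj1 n ω) ((i:ℤ) - 1) = 0
      rw [extStr_proj1]
      rcases eq_or_lt_of_le (show (j₀:ℤ) ≤ (i:ℤ) - 1 by omega) with he | hlt
      · rw [← he, hu1]; rfl
      · exact pr_ne2 (h2 _ hlt)
    omega

end TASEP
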